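/- Let n ≥ 2, c a prime divisor of n, d = n/c. Fix a, b ∈ Z_n with b ≡ a + kd (mod n) for some 1 ≤ k ≤ c-1, and fix a', b' ∈ Z_n with b' ≡ a' + hd (mod n) for some 0 ≤ h ≤ c-1. Then the number of quandle endomorphisms φ of the dihedral quandle Z_n with φ(a) = a' and φ(b) = b' is exactly d. -/

import Mathlib

theorem dihedral_affine {n : ℕ} [NeZero n] (φ : ZMod n → ZMod n)
    (H : ∀ x y : ZMod n, φ (2 * y - x) = 2 * φ y - φ x) :
    ∀ x : ZMod n, φ x = (φ 1 - φ 0) * x + φ 0 := by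
  have rec2 : ∀ x : ZMod n, φ (x + 2) = 2 * φ (x + 1) - φ x := by
    intro x
    have h := H x (x + 1)
    rw [show 2 * (x+1) - x = x + 2 by ring] at h
    exact h
  have key : ∀ j : ℕ, φ (j : ZMod n) = (φ 1 - φ 0) * (j : ZMod n) + φ 0 := by
    intro j
    induction j using Nat.twoStepInduction with
    | zero => simp
    | one => simp
    | more j ih1 ih2 =>
      have h := rec2 (j : ZMod n)
      push_cast
      push_cast at ih1 ih2
      rw [h, ih1, ih2]
      ring
  intro x
  have hx : ((x.val : ℕ) : ZMod n) = x := ZMod.natCast_zmod_val x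
  rw [← hx]
  exact key x.val

/-- Counting solutions of `m * (k*d) = h*d` in `ZMod n` where `n = c*d`. -/
theorem dihedral_slope_count (n c k h : ℕ) (hn : 2 ≤ n) (hc : Nat.Prime c)
    (hdvd : c ∣ n) (hk1 : 1 ≤ k) (hk2 : k ≤ c - 1) (hh : h ≤ c - 1) [NeZero n] :
    Fintype.card {m : ZMod n //
        m * ((k * (n / c) : ℕ) : ZMod n) = ((h * (n / c) : ℕ) : ZMod n)} = n / c := by
  set d := n / c with hd
  have hn0 : 0 < n := by omega
  have hc0 : 0 < c := hc.pos
  have hd0 : 0 < d := Nat.div_pos (Nat.le_of_dvd hn0 hdvd) hc0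
  haveI : NeZero d := ⟨hd0.ne'⟩
  haveI : NeZero c := ⟨hc0.ne'⟩
  haveI := Fact.mk hc
  have hcd : c * d = n := Nat.mul_div_cancel' hdvd
  have hck : ¬ c ∣ k := by
    intro hck
    have := Nat.le_of_dvd (by omega) hck
    omega
  -- k is invertible mod c
  have hk0 : (k : ZMod c) ≠ 0 := by
    rw [Ne, ZMod.natCast_eq_zero_iff]
    exact hck
  -- pick a base solution m0
  set u : ZMod c := (k : ZMod c)⁻¹ * (h : ZMod c) with hu
  set m0 : ℕ := u.val with hm0def
  have hm0c : ((m0 * k : ℕ) : ZMod c) = ((h : ℕ) : ZMod c) := by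
    push_cast
    rw [hm0def, ZMod.natCast_zmod_val, hu]
    field_simp
  have hm0mod : m0 * k ≡ h [MOD c] := (ZMod.natCast_eq_natCast_iff _ _ _).mp hm0c
  have hm0n : ((m0 : ℕ) : ZMod n) * ((k * d : ℕ) : ZMod n) = ((h * d : ℕ) : ZMod n) := by
    have h2 : m0 * k * d ≡ h * d [MOD c * d] := Nat.ModEq.mul_right' d hm0mod
    rw [hcd] at h2
    have h3 : ((m0 * k * d : ℕ) : ZMod n) = ((h * d : ℕ) : ZMod n) :=
      (ZMod.natCast_eq_natCast_iff _ _ _).mpr h2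
    rw [← h3]; push_cast; ring
  -- membership implies divisibility by c of (m - m0).val
  have hker : ∀ m : ZMod n, m * ((k * d : ℕ) : ZMod n) = ((h * d : ℕ) : ZMod n) →
      c ∣ (m - (m0 : ZMod n)).val := by
    intro m hm
    set w : ℕ := (m - (m0 : ZMod n)).val with hw
    have hwcast : ((w : ℕ) : ZMod n) = m - (m0 : ZMod n) := ZMod.natCast_zmod_val _
    have hz : ((w * (k * d) : ℕ) : ZMod n) = 0 := by
      rw [Nat.cast_mul, hwcast, sub_mul, hm, hm0n, sub_self]
    have hdvd2 : n ∣ w * (k * d) := (ZMod.natCast_eq_zero_iff _ _).mp hz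
    rw [← hcd] at hdvd2
    have hdvd3 : c ∣ w * k := by
      have : c * d ∣ (w * k) * d := by
        rw [show w * k * d = w * (k * d) by ring]; exact hdvd2
      exact (Nat.mul_dvd_mul_iff_right hd0).mp this
    exact (hc.dvd_mul.mp hdvd3).resolve_right hck
  -- the equivalence with ZMod d
  have e : {m : ZMod n //
      m * ((k * d : ℕ) : ZMod n) = ((h * d : ℕ) : ZMod n)} ≃ ZMod d := by
    refine ⟨fun m => (((m.1 - (m0 : ZMod n)).val / c : ℕ) : ZMod d),
      fun j => ⟨(m0 : ZMod n) + ((c * j.val : ℕ) : ZMod n), ?_⟩, ?_, ?_⟩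
    · have hz : ((c * j.val * (k * d) : ℕ) : ZMod n) = 0 := by
        rw [ZMod.natCast_eq_zero_iff, ← hcd]
        exact ⟨j.val * k, by ring⟩
      have : ((c * j.val : ℕ) : ZMod n) * ((k * d : ℕ) : ZMod n) = 0 := by
        rw [← hz]; push_cast; ring
      rw [add_mul, hm0n, this, add_zero]
    · rintro ⟨m, hm⟩
      have hcw := hker m hm
      set w : ℕ := (m - (m0 : ZMod n)).val with hw
      have hwlt : w < n := ZMod.val_lt _
      have hwd : w / c < d := by
        rw [Nat.div_lt_iff_lt_mul hc0, mul_comm d c, hcd]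
        exact hwlt
      have hval : ((w / c : ℕ) : ZMod d).val = w / c := ZMod.val_cast_of_lt hwd
      apply Subtype.ext
      simp only [hval]
      rw [← hw, hval, Nat.mul_div_cancel' hcw, hw, ZMod.natCast_zmod_val]
      ring
    · intro j
      have hjlt : j.val < d := ZMod.val_lt _
      have hlt : c * j.val < n := by
        calc c * j.val < c * d := by exact Nat.mul_lt_mul_of_pos_left hjlt hc0
        _ = n := hcd
      have h1 : ((m0 : ZMod n) + ((c * j.val : ℕ) : ZMod n)) - (m0 : ZMod n)
          = ((c * j.val : ℕ) : ZMod n) := by ring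
      show (((((m0 : ZMod n) + ((c * j.val : ℕ) : ZMod n)) - (m0 : ZMod n)).val / c : ℕ)
          : ZMod d) = j
      rw [h1, ZMod.val_cast_of_lt hlt, Nat.mul_div_cancel_left _ hc0,
        ZMod.natCast_zmod_val]
  rw [Fintype.card_congr e, ZMod.card]

/-- Edge-weight count: if `c` is a prime divisor of `n`, `d = n/c`, `b = a + kd` with
`1 ≤ k ≤ c-1`, and `b' = a' + hd` with `0 ≤ h ≤ c-1`, then exactly `d` quandle
endomorphisms `φ` of the dihedral quandle `ZMod n` satisfy `φ(a) = a'` and `φ(b) = b'`. -/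
theorem dihedral_hom_two_point_count (n c k h : ℕ) (hn : 2 ≤ n) (hc : Nat.Prime c)
    (hdvd : c ∣ n) (hk1 : 1 ≤ k) (hk2 : k ≤ c - 1) (hh : h ≤ c - 1)
    (a a' : ZMod n) [NeZero n] :
    Fintype.card {φ : ZMod n → ZMod n //
        (∀ x y : ZMod n, φ (2 * y - x) = 2 * φ y - φ x) ∧
        φ a = a' ∧ φ (a + ((k * (n / c) : ℕ) : ZMod n)) = a' + ((h * (n / c) : ℕ) : ZMod n)}
      = n / c := by
  have e : {m : ZMod n //
      m * ((k * (n / c) : ℕ) : ZMod n) = ((h * (n / c) : ℕ) : ZMod n)} ≃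
      {φ : ZMod n → ZMod n //
        (∀ x y : ZMod n, φ (2 * y - x) = 2 * φ y - φ x) ∧
        φ a = a' ∧ φ (a + ((k * (n / c) : ℕ) : ZMod n))
          = a' + ((h * (n / c) : ℕ) : ZMod n)} := by
    refine ⟨fun m => ⟨fun x => m.1 * (x - a) + a', ?_, ?_, ?_⟩,
      fun φ => ⟨φ.1 (a + 1) - φ.1 a, ?_⟩, ?_, ?_⟩
    · intro x y; ring
    · ring
    · show m.1 * ((a + ((k * (n / c) : ℕ) : ZMod n)) - a) + a'
          = a' + ((h * (n / c) : ℕ) : ZMod n)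
      rw [show (a + ((k * (n / c) : ℕ) : ZMod n)) - a = ((k * (n / c) : ℕ) : ZMod n) by ring,
        m.2]
      ring
    · -- membership of the slope
      obtain ⟨φ, H, hφ1, hφ2⟩ := φ
      have aff := dihedral_affine φ H
      have h1 : φ (a + 1) - φ a = φ 1 - φ 0 := by rw [aff (a + 1), aff a]; ring
      have h2 : φ (a + ((k * (n / c) : ℕ) : ZMod n)) - φ a
          = (φ 1 - φ 0) * ((k * (n / c) : ℕ) : ZMod n) := by
        rw [aff (a + ((k * (n / c) : ℕ) : ZMod n)), aff a]; ring
      rw [hφ1, hφ2] at h2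
      simp only [h1]
      rw [← h2]; ring
    · rintro ⟨m, hm⟩
      apply Subtype.ext
      simp only
      ring
    · rintro ⟨φ, H, hφ1, hφ2⟩
      have aff := dihedral_affine φ H
      apply Subtype.ext
      funext x
      simp only
      have h1 : φ (a + 1) - φ a = φ 1 - φ 0 := by rw [aff (a + 1), aff a]; ring
      rw [h1, aff x, ← hφ1, aff a]
      ring
  rw [← Fintype.card_congr e]
  exact dihedral_slope_count n c k h hn hc hdvd hk1 hk2 hh
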